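/- arXiv:1506.07216 — 4 statements merged into one kernel-verified Lean document; each statement's English description precedes it below -/
import Mathlib

section
/- Let 𝒯 be a measurable space with a σ-finite measure λ, let m ≥ 1, and for each i ∈ {1,…,m} let q_i : {0,1} × 𝒯 → [0,∞) be measurable. For each b ∈ {0,1}^m let P_b be the measure on 𝒯 with density π ↦ ∏_{i=1}^m q_i(b_i, π) with respect to λ, and assume each P_b is a probability measure. Then for all a, b, c, d ∈ {0,1}^m satisfying {a_i, b_i} = {c_i, d_i} as multisets for every i ∈ {1,…,m}: (dP_a/dλ)(π)·(dP_b/dλ)(π) = (dP_c/dλ)(π)·(dP_d/dλ)(π) for λ-almost every π, and consequently h²(P_a, P_b) = h²(P_c, P_d). -/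
open MeasureTheory
open scoped ENNReal NNReal Classical

/-- Squared Hellinger distance between two measures, computed with respect to the
dominating measure `P + Q`. -/
noncomputable def sqHellinger {α : Type*} [MeasurableSpace α] (P Q : Measure α) : ℝ :=
  (1 / 2) * ∫ x, (Real.sqrt ((P.rnDeriv (P + Q) x).toReal)
      - Real.sqrt ((Q.rnDeriv (P + Q) x).toReal)) ^ 2 ∂(P + Q)

lemma sqHellinger_withDensity {T : Type*} [MeasurableSpace T] (lam : Measure T)
    [SigmaFinite lam] (f g : T → ℝ≥0∞) (hf : Measurable f) (hg : Measurable g)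
    (hfP : IsProbabilityMeasure (lam.withDensity f))
    (hgP : IsProbabilityMeasure (lam.withDensity g)) :
    sqHellinger (lam.withDensity f) (lam.withDensity g)
      = 1 - ∫ x, Real.sqrt ((f x * g x).toReal) ∂lam := by
  set s : T → ℝ≥0∞ := fun x => f x + g x with hs_def
  have hs : Measurable s := hf.add hg
  have hsum : lam.withDensity f + lam.withDensity g = lam.withDensity s :=
    (withDensity_add_left hf g).symm
  -- lintegrals are 1
  have hfl : ∫⁻ x, f x ∂lam = 1 := by
    have := hfP.measure_univ
    rwa [withDensity_apply _ MeasurableSet.univ, Measure.restrict_univ] at this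
  have hgl : ∫⁻ x, g x ∂lam = 1 := by
    have := hgP.measure_univ
    rwa [withDensity_apply _ MeasurableSet.univ, Measure.restrict_univ] at this
  have hflt : ∀ᵐ x ∂lam, f x ≠ ∞ := by
    filter_upwards [ae_lt_top hf (by rw [hfl]; exact ENNReal.one_ne_top)] with x hx using hx.ne
  have hglt : ∀ᵐ x ∂lam, g x ≠ ∞ := by
    filter_upwards [ae_lt_top hg (by rw [hgl]; exact ENNReal.one_ne_top)] with x hx using hx.ne
  have hslt : ∀ᵐ x ∂lam, s x ≠ ∞ := by
    filter_upwards [hflt, hglt] with x hx hy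
    simp [hs_def, ENNReal.add_ne_top, hx, hy]
  haveI : IsFiniteMeasure (lam.withDensity s) := by
    rw [← hsum]; infer_instance
  -- Radon-Nikodym derivatives
  have hrn : ∀ (u : T → ℝ≥0∞), Measurable u → (∀ x, u x ≤ s x) →
      (lam.withDensity u).rnDeriv (lam.withDensity s)
        =ᵐ[lam.withDensity s] fun x => u x / s x := by
    intro u hu hle
    have hwd : (lam.withDensity s).withDensity (fun x => u x / s x) = lam.withDensity u := by
      rw [show (fun x => u x / s x) = u / s from rfl, ← withDensity_mul lam hs (hu.div hs)]
      refine withDensity_congr_ae ?_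
      filter_upwards [hslt] with x hx
      rcases eq_or_ne (s x) 0 with h0 | h0
      · have hu0 : u x = 0 := le_antisymm (h0 ▸ hle x) (zero_le)
        simp [h0, hu0]
      · exact ENNReal.mul_div_cancel h0 hx
    have h2 := Measure.rnDeriv_withDensity (lam.withDensity s) (hu.div hs)
    rwa [show u / s = (fun x => u x / s x) from rfl, hwd] at h2
  have hrnf := hrn f hf (fun x => le_add_right le_rfl)
  have hrng := hrn g hg (fun x => le_add_left le_rfl)
  -- rewrite the Hellinger integral
  rw [sqHellinger, hsum]
  have step1 : ∫ x, (Real.sqrt (((lam.withDensity f).rnDeriv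
          (lam.withDensity f + lam.withDensity g) x).toReal)
        - Real.sqrt (((lam.withDensity g).rnDeriv
          (lam.withDensity f + lam.withDensity g) x).toReal)) ^ 2 ∂(lam.withDensity s)
      = ∫ x, (Real.sqrt ((f x / s x).toReal) - Real.sqrt ((g x / s x).toReal)) ^ 2
          ∂(lam.withDensity s) := by
    rw [hsum]
    refine integral_congr_ae ?_
    filter_upwards [hrnf, hrng] with x h1 h2
    rw [h1, h2]
  rw [hsum] at step1
  rw [step1]
  -- transfer to lam using the NNReal-valued density
  have hcongr : lam.withDensity s
      = lam.withDensity (fun x => ((s x).toNNReal : ℝ≥0∞)) := by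
    refine withDensity_congr_ae ?_
    filter_upwards [hslt] with x hx
    exact (ENNReal.coe_toNNReal hx).symm
  have step2 : ∫ x, (Real.sqrt ((f x / s x).toReal) - Real.sqrt ((g x / s x).toReal)) ^ 2
        ∂(lam.withDensity s)
      = ∫ x, (s x).toNNReal •
          ((Real.sqrt ((f x / s x).toReal) - Real.sqrt ((g x / s x).toReal)) ^ 2) ∂lam := by
    rw [hcongr]
    exact integral_withDensity_eq_integral_smul hs.ennreal_toNNReal _
  rw [step2]
  -- simplify the integrand a.e. w.r.t. lam
  have step3 : ∫ x, (s x).toNNReal •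
          ((Real.sqrt ((f x / s x).toReal) - Real.sqrt ((g x / s x).toReal)) ^ 2) ∂lam
      = ∫ x, ((f x).toReal + (g x).toReal
          - 2 * Real.sqrt ((f x * g x).toReal)) ∂lam := by
    refine integral_congr_ae ?_
    filter_upwards [hflt, hglt] with x hfx hgx
    have hsx : s x ≠ ∞ := by simp [hs_def, ENNReal.add_ne_top, hfx, hgx]
    set ft := (f x).toReal with hft
    set gt := (g x).toReal with hgt
    have hft0 : 0 ≤ ft := ENNReal.toReal_nonneg
    have hgt0 : 0 ≤ gt := ENNReal.toReal_nonneg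
    have hst : (s x).toReal = ft + gt := ENNReal.toReal_add hfx hgx
    have hsmul : ((s x).toNNReal : ℝ) = (s x).toReal := rfl
    rcases eq_or_ne (s x) 0 with h0 | h0
    · have hf0 : f x = 0 := by
        have : f x ≤ s x := le_add_right le_rfl
        exact le_antisymm (h0 ▸ this) (zero_le)
      have hg0 : g x = 0 := by
        have : g x ≤ s x := le_add_left le_rfl
        exact le_antisymm (h0 ▸ this) (zero_le)
      simp [h0, hf0, hg0, hft, hgt]
    · have hstpos : 0 < (s x).toReal := ENNReal.toReal_pos h0 hsx
      have hfd : (f x / s x).toReal = ft / (s x).toReal := by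
        rw [ENNReal.toReal_div]
      have hgd : (g x / s x).toReal = gt / (s x).toReal := by
        rw [ENNReal.toReal_div]
      rw [hfd, hgd, Real.sqrt_div hft0, Real.sqrt_div hgt0, NNReal.smul_def, smul_eq_mul, hsmul]
      have hsqrt_pos : 0 < Real.sqrt (s x).toReal := Real.sqrt_pos.mpr hstpos
      have hsq : Real.sqrt (s x).toReal ^ 2 = (s x).toReal := Real.sq_sqrt hstpos.le
      have key : (Real.sqrt ft / Real.sqrt (s x).toReal
            - Real.sqrt gt / Real.sqrt (s x).toReal) ^ 2
          = (Real.sqrt ft - Real.sqrt gt) ^ 2 / (s x).toReal := by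
        rw [div_sub_div_same, div_pow, hsq]
      rw [key, mul_div_cancel₀ _ hstpos.ne']
      have hexp : (Real.sqrt ft - Real.sqrt gt) ^ 2
          = ft + gt - 2 * (Real.sqrt ft * Real.sqrt gt) := by
        have h1 : Real.sqrt ft ^ 2 = ft := Real.sq_sqrt hft0
        have h2 : Real.sqrt gt ^ 2 = gt := Real.sq_sqrt hgt0
        nlinarith [h1, h2]
      rw [hexp, ← Real.sqrt_mul hft0, ← ENNReal.toReal_mul]
  rw [step3]
  -- integrability facts
  have hmf : Integrable (fun x => (f x).toReal) lam :=
    integrable_toReal_of_lintegral_ne_top hf.aemeasurable (by rw [hfl]; exact ENNReal.one_ne_top)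
  have hmg : Integrable (fun x => (g x).toReal) lam :=
    integrable_toReal_of_lintegral_ne_top hg.aemeasurable (by rw [hgl]; exact ENNReal.one_ne_top)
  have hflt' : ∀ᵐ x ∂lam, f x < ∞ := by
    filter_upwards [hflt] with x hx using hx.lt_top
  have hglt' : ∀ᵐ x ∂lam, g x < ∞ := by
    filter_upwards [hglt] with x hx using hx.lt_top
  have hintf : ∫ x, (f x).toReal ∂lam = 1 := by
    rw [integral_toReal hf.aemeasurable hflt', hfl, ENNReal.toReal_one]
  have hintg : ∫ x, (g x).toReal ∂lam = 1 := by
    rw [integral_toReal hg.aemeasurable hglt', hgl, ENNReal.toReal_one]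
  have hadd : Integrable (fun x => (f x).toReal + (g x).toReal) lam := hmf.add hmg
  have hmsqrt : Integrable (fun x => Real.sqrt ((f x * g x).toReal)) lam := by
    refine Integrable.mono' (hadd.div_const 2)
      ((hf.mul hg).ennreal_toReal.sqrt.aestronglyMeasurable) ?_
    refine ae_of_all _ fun x => ?_
    rw [Real.norm_eq_abs, abs_of_nonneg (Real.sqrt_nonneg _)]
    rw [ENNReal.toReal_mul, Real.sqrt_mul ENNReal.toReal_nonneg]
    have h1 : Real.sqrt (f x).toReal ^ 2 = (f x).toReal :=
      Real.sq_sqrt ENNReal.toReal_nonneg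
    have h2 : Real.sqrt (g x).toReal ^ 2 = (g x).toReal :=
      Real.sq_sqrt ENNReal.toReal_nonneg
    nlinarith [sq_nonneg (Real.sqrt (f x).toReal - Real.sqrt (g x).toReal)]
  -- compute the integral
  have hsplit : ∫ x, ((f x).toReal + (g x).toReal - 2 * Real.sqrt ((f x * g x).toReal)) ∂lam
      = (∫ x, (f x).toReal ∂lam) + (∫ x, (g x).toReal ∂lam)
        - 2 * ∫ x, Real.sqrt ((f x * g x).toReal) ∂lam := by
    rw [integral_sub hadd (hmsqrt.const_mul 2), integral_add hmf hmg,
      integral_const_mul]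
  rw [hsplit, hintf, hintg]
  ring

/-- **Cut-paste property of protocols.** If the measures `P_b` have densities with respect
to a σ-finite measure `λ` that factorize as `π ↦ ∏_i q_i(b_i, π)`, then for all
`a, b, c, d ∈ {0,1}^m` with `{a_i, b_i} = {c_i, d_i}` as multisets for each `i`, the
products of the densities of `P_a, P_b` and of `P_c, P_d` agree `λ`-a.e., and consequently
`h²(P_a, P_b) = h²(P_c, P_d)`. -/
theorem cut_paste_of_factorizing
    {T : Type*} [MeasurableSpace T] (lam : Measure T) [SigmaFinite lam]
    (m : ℕ) (hm : 1 ≤ m) (q : Fin m → Bool → T → ℝ≥0)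
    (hq : ∀ i b, Measurable (q i b))
    (P : (Fin m → Bool) → Measure T)
    (hP : ∀ b, P b = lam.withDensity (fun π => ∏ i, (q i (b i) π : ℝ≥0∞)))
    (hprob : ∀ b, IsProbabilityMeasure (P b))
    (a b c d : Fin m → Bool)
    (h : ∀ i, ({a i, b i} : Multiset Bool) = ({c i, d i} : Multiset Bool)) :
    (∀ᵐ π ∂lam,
        (∏ i, (q i (a i) π : ℝ≥0∞)) * ∏ i, (q i (b i) π : ℝ≥0∞)
          = (∏ i, (q i (c i) π : ℝ≥0∞)) * ∏ i, (q i (d i) π : ℝ≥0∞)) ∧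
      sqHellinger (P a) (P b) = sqHellinger (P c) (P d) := by
  have hpt : ∀ π, (∏ i, (q i (a i) π : ℝ≥0∞)) * ∏ i, (q i (b i) π : ℝ≥0∞)
      = (∏ i, (q i (c i) π : ℝ≥0∞)) * ∏ i, (q i (d i) π : ℝ≥0∞) := by
    intro π
    rw [← Finset.prod_mul_distrib, ← Finset.prod_mul_distrib]
    refine Finset.prod_congr rfl fun i _ => ?_
    have hi := h i
    cases hA : a i <;> cases hB : b i <;> cases hC : c i <;> cases hD : d i <;>
      rw [hA, hB, hC, hD] at hi <;>
      first
        | rfl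
        | (exact absurd hi (by decide))
        | (exact mul_comm _ _)
  have hmeas : ∀ (e : Fin m → Bool),
      Measurable (fun π => ∏ i, (q i (e i) π : ℝ≥0∞)) := fun e =>
    Finset.measurable_prod _ (fun i _ => (hq i (e i)).coe_nnreal_ennreal)
  have hprob' : ∀ (e : Fin m → Bool),
      IsProbabilityMeasure (lam.withDensity (fun π => ∏ i, (q i (e i) π : ℝ≥0∞))) := by
    intro e
    have := hprob e
    rwa [hP e] at this
  refine ⟨ae_of_all _ hpt, ?_⟩
  rw [hP a, hP b, hP c, hP d,
    sqHellinger_withDensity lam _ _ (hmeas a) (hmeas b) (hprob' a) (hprob' b),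
    sqHellinger_withDensity lam _ _ (hmeas c) (hmeas d) (hprob' c) (hprob' d)]
  refine congrArg _ (integral_congr_ae (ae_of_all _ fun x => ?_))
  dsimp only
  rw [hpt x]
end

section
/- Let a < b be real numbers, let c > 0, and let u0, u1 : [a,b] → ℝ be twice differentiable functions with u0''(x) ≥ c, u1''(x) ≥ c, and |u0'(x) − u1'(x)| ≤ √(2c) for all x ∈ [a,b]. Then the function u(x) = −log( (1/2)(e^{−u0(x)} + e^{−u1(x)}) ) is twice differentiable on [a,b] and satisfies u''(x) ≥ c/2 for all x ∈ [a,b]. (Equivalently: if dμ0 = e^{−u0}dx and dμ1 = e^{−u1}dx on [a,b] are c-log-concave and their potentials have derivatives within √(2c) of each other, then the mixture μ = (1/2)(μ0 + μ1) has density e^{−u} with u being (c/2)-strongly convex.) -/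
open Real

/-- **Strong log-concavity of a balanced mixture.** If `u0, u1` are twice differentiable on
`[a,b]` with `u0'' ≥ c`, `u1'' ≥ c` and `|u0' − u1'| ≤ √(2c)` there, then
`u(x) = −log((1/2)(e^{−u0(x)} + e^{−u1(x)}))` is twice differentiable on `[a,b]` with
`u'' ≥ c/2` there. -/
theorem mixture_strongly_logConcave
    (a b c : ℝ) (hab : a < b) (hc : 0 < c)
    (u0 u0' u0'' u1 u1' u1'' : ℝ → ℝ)
    (hu0 : ∀ x ∈ Set.Icc a b,
      HasDerivWithinAt u0 (u0' x) (Set.Icc a b) x ∧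
      HasDerivWithinAt u0' (u0'' x) (Set.Icc a b) x ∧ c ≤ u0'' x)
    (hu1 : ∀ x ∈ Set.Icc a b,
      HasDerivWithinAt u1 (u1' x) (Set.Icc a b) x ∧
      HasDerivWithinAt u1' (u1'' x) (Set.Icc a b) x ∧ c ≤ u1'' x)
    (hclose : ∀ x ∈ Set.Icc a b, |u0' x - u1' x| ≤ Real.sqrt (2 * c)) :
    ∃ u' u'' : ℝ → ℝ, ∀ x ∈ Set.Icc a b,
      HasDerivWithinAt (fun y => -Real.log ((1 / 2) * (Real.exp (-u0 y) + Real.exp (-u1 y))))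
        (u' x) (Set.Icc a b) x ∧
      HasDerivWithinAt u' (u'' x) (Set.Icc a b) x ∧
      c / 2 ≤ u'' x := by
  refine ⟨fun x => (u0' x * Real.exp (-u0 x) + u1' x * Real.exp (-u1 x)) /
      (Real.exp (-u0 x) + Real.exp (-u1 x)),
    fun x => (((u0'' x - (u0' x) ^ 2) * Real.exp (-u0 x) +
        (u1'' x - (u1' x) ^ 2) * Real.exp (-u1 x)) *
        (Real.exp (-u0 x) + Real.exp (-u1 x)) +
        (u0' x * Real.exp (-u0 x) + u1' x * Real.exp (-u1 x)) ^ 2) /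
      (Real.exp (-u0 x) + Real.exp (-u1 x)) ^ 2, ?_⟩
  intro x hx
  obtain ⟨h0, h0', h0c⟩ := hu0 x hx
  obtain ⟨h1, h1', h1c⟩ := hu1 x hx
  have e0pos : (0:ℝ) < Real.exp (-u0 x) := Real.exp_pos _
  have e1pos : (0:ℝ) < Real.exp (-u1 x) := Real.exp_pos _
  have Spos : (0:ℝ) < Real.exp (-u0 x) + Real.exp (-u1 x) := by positivity
  -- derivatives of the exponentials
  have he0 : HasDerivWithinAt (fun y => Real.exp (-u0 y))
      (Real.exp (-u0 x) * (-u0' x)) (Set.Icc a b) x := h0.neg.exp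
  have he1 : HasDerivWithinAt (fun y => Real.exp (-u1 y))
      (Real.exp (-u1 x) * (-u1' x)) (Set.Icc a b) x := h1.neg.exp
  have hS : HasDerivWithinAt (fun y => Real.exp (-u0 y) + Real.exp (-u1 y))
      (Real.exp (-u0 x) * (-u0' x) + Real.exp (-u1 x) * (-u1' x)) (Set.Icc a b) x :=
    he0.add he1
  -- first derivative
  have hu1st : HasDerivWithinAt
      (fun y => -Real.log ((1 / 2) * (Real.exp (-u0 y) + Real.exp (-u1 y))))
      ((u0' x * Real.exp (-u0 x) + u1' x * Real.exp (-u1 x)) /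
        (Real.exp (-u0 x) + Real.exp (-u1 x))) (Set.Icc a b) x := by
    have hg : HasDerivWithinAt (fun y => (1 / 2 : ℝ) * (Real.exp (-u0 y) + Real.exp (-u1 y)))
        ((1 / 2) * (Real.exp (-u0 x) * (-u0' x) + Real.exp (-u1 x) * (-u1' x)))
        (Set.Icc a b) x := hS.const_mul (1 / 2)
    have hgne : (1 / 2 : ℝ) * (Real.exp (-u0 x) + Real.exp (-u1 x)) ≠ 0 := by positivity
    have := (hg.log hgne).neg
    refine this.congr_deriv ?_
    field_simp
    ring
  refine ⟨hu1st, ?_, ?_⟩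
  · -- second derivative
    have hN : HasDerivWithinAt (fun y => u0' y * Real.exp (-u0 y) + u1' y * Real.exp (-u1 y))
        ((u0'' x * Real.exp (-u0 x) + u0' x * (Real.exp (-u0 x) * (-u0' x))) +
         (u1'' x * Real.exp (-u1 x) + u1' x * (Real.exp (-u1 x) * (-u1' x))))
        (Set.Icc a b) x := (h0'.mul he0).add (h1'.mul he1)
    have := hN.div hS Spos.ne'
    refine this.congr_deriv ?_
    field_simp
    ring
  · -- the inequality
    have hd := hclose x hx
    have hsq : (u0' x - u1' x) ^ 2 ≤ 2 * c := by
      calc (u0' x - u1' x) ^ 2 = |u0' x - u1' x| ^ 2 := (sq_abs _).symm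
        _ ≤ Real.sqrt (2 * c) ^ 2 := by
            exact pow_le_pow_left₀ (abs_nonneg _) hd 2
        _ = 2 * c := Real.sq_sqrt (by positivity)
    rw [le_div_iff₀ (by positivity)]
    nlinarith [mul_nonneg (mul_nonneg (sub_nonneg.2 h0c) e0pos.le) Spos.le,
      mul_nonneg (mul_nonneg (sub_nonneg.2 h1c) e1pos.le) Spos.le,
      mul_nonneg (sub_nonneg.2 hsq) (mul_pos e0pos e1pos).le,
      mul_nonneg hc.le (sq_nonneg (Real.exp (-u0 x) - Real.exp (-u1 x)))]
end

section
/- Let a < b be real numbers, let c > 0, and let U : [a,b] → ℝ be twice differentiable with U''(x) ≥ c for all x ∈ [a,b]. Let μ be the measure on ℝ with density e^{−U(x)} on [a,b] and density 0 outside [a,b], and assume μ is a probability measure. Then for every continuously differentiable 1-Lipschitz function f : ℝ → ℝ and every λ ≥ 0: Ent_μ(e^{λf}) ≤ (λ²/(2c))·∫ e^{λf} dμ. -/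
open MeasureTheory
open scoped ENNReal NNReal Classical

open Set Filter intervalIntegral

/-- Mass-transport parametrization of a positive continuous density on `[a,b]`. -/
lemma exists_param (a b : ℝ) (hab : a < b) (u : ℝ → ℝ)
    (hu : ContinuousOn u (Set.Icc a b)) (hupos : ∀ x ∈ Set.Icc a b, 0 < u x) :
    (0 < ∫ x in a..b, u x) ∧ ∃ X : ℝ → ℝ, X 0 = a ∧ X 1 = b ∧ (∀ s ∈ Set.Icc (0:ℝ) 1, X s ∈ Set.Icc a b) ∧
      (∀ s ∈ Set.Icc (0:ℝ) 1, HasDerivAt X ((∫ x in a..b, u x) / u (X s)) s) ∧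
      ContinuousOn (fun s => (∫ x in a..b, u x) / u (X s)) (Set.Icc 0 1) := by
  classical
  -- clamp extension
  set cl : ℝ → ℝ := fun x => max a (min b x) with hcl
  have hclmem : ∀ x, cl x ∈ Set.Icc a b :=
    fun x => ⟨le_max_left _ _, max_le hab.le (min_le_left _ _)⟩
  have hcl_eq : ∀ x ∈ Set.Icc a b, cl x = x := by
    intro x hx
    simp only [hcl]
    rw [min_eq_right hx.2, max_eq_right hx.1]
  have hclcont : Continuous cl := continuous_const.max (continuous_const.min continuous_id)
  set uc : ℝ → ℝ := fun x => u (cl x) with huc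
  have hucont : Continuous uc :=
    (hu.comp_continuous hclcont hclmem)
  have hucpos : ∀ x, 0 < uc x := fun x => hupos _ (hclmem x)
  have huceq : ∀ x ∈ Set.Icc a b, uc x = u x := fun x hx => by
    simp only [huc, hcl_eq x hx]
  -- δ lower bound
  obtain ⟨xm, hxm, hxmin⟩ := isCompact_Icc.exists_isMinOn (Set.nonempty_Icc.2 hab.le)
    (hu.comp_continuous hclcont hclmem).continuousOn
  set δ : ℝ := uc xm with hδ
  have hδpos : 0 < δ := hucpos xm
  have hδle : ∀ x, δ ≤ uc x := by
    intro x
    have h1 : cl x ∈ Set.Icc a b := hclmem x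
    have := hxmin (by exact h1 : cl x ∈ Set.Icc a b)
    simpa [huc, hcl_eq _ h1] using this
  -- the cumulative function
  set A : ℝ → ℝ := fun x => ∫ y in a..x, uc y with hA
  have hInt : ∀ x y : ℝ, IntervalIntegrable uc volume x y := fun x y =>
    hucont.intervalIntegrable x y
  have hAderiv : ∀ x, HasDerivAt A (uc x) x := by
    intro x
    exact intervalIntegral.integral_hasDerivAt_right (hInt a x)
      (hucont.stronglyMeasurableAtFilter _ _) hucont.continuousAt
  have hAmono : StrictMono A := by
    apply strictMono_of_deriv_pos
    intro x
    rw [(hAderiv x).deriv]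
    exact hucpos x
  have hAcont : Continuous A := continuous_iff_continuousAt.2 (fun x => (hAderiv x).continuousAt)
  have hAsurj : Function.Surjective A := by
    apply Continuous.surjective hAcont
    · -- atTop
      apply tendsto_atTop_mono' _ (Filter.eventually_atTop.2 ⟨a, fun x hx => ?_⟩)
        (by exact (tendsto_atTop_add_const_right _ _ ((tendsto_const_mul_atTop_of_pos hδpos).2 tendsto_id)) :
          Filter.Tendsto (fun x => δ * x + (- δ * a)) atTop atTop)
      have h3 : (x - a) * δ ≤ A x := by
        have := intervalIntegral.integral_mono_on hx
          (intervalIntegrable_const) (hInt a x) (fun y _ => hδle y)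
        simpa [hA] using this
      nlinarith
    · -- atBot
      apply tendsto_atBot_mono' _ (Filter.eventually_atBot.2 ⟨a, fun x hx => ?_⟩)
        (by exact (tendsto_atBot_add_const_right _ _ ((tendsto_const_mul_atBot_of_pos hδpos).2 tendsto_id)) :
          Filter.Tendsto (fun x => δ * x + (- δ * a)) atBot atBot)
      have : A x ≤ δ * (x - a) := by
        have h1 : A x = - ∫ y in x..a, uc y := by
          simp [hA, intervalIntegral.integral_symm a x]
        have h2 : (a - x) * δ ≤ ∫ y in x..a, uc y := by
          have := intervalIntegral.integral_mono_on hx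
            (intervalIntegrable_const) (hInt x a) (fun y _ => hδle y)
          simpa using this
        nlinarith
      nlinarith
  set E := StrictMono.orderIsoOfSurjective A hAmono hAsurj with hE
  have hEcoe : ∀ x, E x = A x := fun x => by
    rw [hE, StrictMono.coe_orderIsoOfSurjective]
  have hEsymm : ∀ y, A (E.symm y) = y := fun y => by
    rw [← hEcoe]; exact E.apply_symm_apply y
  have hEsymmA : ∀ x, E.symm (A x) = x := fun x => by
    have : E.symm (E x) = x := E.symm_apply_apply x
    rwa [hEcoe] at this
  have hEsymm_cont : Continuous (E.symm : ℝ → ℝ) := OrderIso.continuous _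
  set I : ℝ := ∫ x in a..b, u x with hI
  have hIA : A b = I := by
    apply intervalIntegral.integral_congr
    intro x hx
    exact huceq x (by rwa [Set.uIcc_of_le hab.le] at hx)
  have hAa : A a = 0 := intervalIntegral.integral_same
  have hIpos : 0 < I := by
    rw [← hIA, ← hAa]
    exact hAmono hab
  set X : ℝ → ℝ := fun s => E.symm (s * I) with hX
  have hXcont : Continuous X := hEsymm_cont.comp (continuous_id.mul continuous_const)
  have hX0 : X 0 = a := by
    show E.symm (0 * I) = a
    rw [zero_mul, ← hAa, hEsymmA]
  have hX1 : X 1 = b := by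
    show E.symm (1 * I) = b
    rw [one_mul, ← hIA, hEsymmA]
  have hXmem : ∀ s ∈ Set.Icc (0:ℝ) 1, X s ∈ Set.Icc a b := by
    intro s hs
    constructor
    · rw [← hX0]
      exact E.symm.monotone (by nlinarith [hs.1, hIpos] : (0:ℝ) * I ≤ s * I)
    · rw [← hX1]
      exact E.symm.monotone (by nlinarith [hs.2, hIpos] : s * I ≤ 1 * I)
  have hXd : ∀ s : ℝ, HasDerivAt X ((uc (X s))⁻¹ * I) s := by
    intro s
    have h1 : HasDerivAt (fun y => (E.symm y : ℝ)) ((uc (X s))⁻¹) (s * I) := by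
      exact HasDerivAt.of_local_left_inverse hEsymm_cont.continuousAt
        (hAderiv (E.symm (s * I))) (ne_of_gt (hucpos _))
        (Filter.Eventually.of_forall hEsymm)
    exact h1.comp s (hasDerivAt_mul_const I)
  refine ⟨hI ▸ hIpos, X, hX0, hX1, hXmem, ?_, ?_⟩
  · intro s hs
    have := hXd s
    rwa [huceq _ (hXmem s hs), inv_mul_eq_div] at this
  · apply ContinuousOn.div continuousOn_const
    · exact hu.comp hXcont.continuousOn hXmem
    · intro s hs
      exact ne_of_gt (hupos _ (hXmem s hs))

lemma pl_one_dim (a b t : ℝ) (hab : a < b) (ht : 0 < t) (ht1 : t < 1)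
    (u v w : ℝ → ℝ)
    (hu : ContinuousOn u (Set.Icc a b)) (hv : ContinuousOn v (Set.Icc a b))
    (hw : ContinuousOn w (Set.Icc a b))
    (hupos : ∀ x ∈ Set.Icc a b, 0 < u x) (hvpos : ∀ x ∈ Set.Icc a b, 0 < v x)
    (hyp : ∀ x ∈ Set.Icc a b, ∀ y ∈ Set.Icc a b,
      u x ^ t * v y ^ (1 - t) ≤ w (t * x + (1 - t) * y)) :
    (∫ x in a..b, u x) ^ t * (∫ x in a..b, v x) ^ (1 - t) ≤ ∫ x in a..b, w x := by
  obtain ⟨hIpos, X, hX0, hX1, hXmem, hXd, hXc⟩ := exists_param a b hab u hu hupos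
  obtain ⟨hJpos, Y, hY0, hY1, hYmem, hYd, hYc⟩ := exists_param a b hab v hv hvpos
  set I : ℝ := ∫ x in a..b, u x with hI
  set J : ℝ := ∫ x in a..b, v x with hJ
  -- clamp extension of w
  set cl : ℝ → ℝ := fun x => max a (min b x) with hcl
  have hclmem : ∀ x, cl x ∈ Set.Icc a b :=
    fun x => ⟨le_max_left _ _, max_le hab.le (min_le_left _ _)⟩
  have hcl_eq : ∀ x ∈ Set.Icc a b, cl x = x := by
    intro x hx
    simp only [hcl]
    rw [min_eq_right hx.2, max_eq_right hx.1]
  have hclcont : Continuous cl := continuous_const.max (continuous_const.min continuous_id)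
  set wc : ℝ → ℝ := fun x => w (cl x) with hwc
  have hwcont : Continuous wc := hw.comp_continuous hclcont hclmem
  have hwceq : ∀ x ∈ Set.Icc a b, wc x = w x := fun x hx => by
    simp only [hwc, hcl_eq x hx]
  have huIcc : Set.uIcc (0:ℝ) 1 = Set.Icc 0 1 := Set.uIcc_of_le zero_le_one
  set Z : ℝ → ℝ := fun s => t * X s + (1 - t) * Y s with hZ
  set Z' : ℝ → ℝ := fun s => t * (I / u (X s)) + (1 - t) * (J / v (Y s)) with hZ'
  have hZd : ∀ s ∈ Set.uIcc (0:ℝ) 1, HasDerivAt Z (Z' s) s := by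
    intro s hs
    rw [huIcc] at hs
    exact ((hXd s hs).const_mul t).add ((hYd s hs).const_mul (1 - t))
  have hZ'c : ContinuousOn Z' (Set.uIcc (0:ℝ) 1) := by
    rw [huIcc]
    exact (continuousOn_const.mul hXc).add (continuousOn_const.mul hYc)
  have hZmem : ∀ s ∈ Set.Icc (0:ℝ) 1, Z s ∈ Set.Icc a b := by
    intro s hs
    obtain ⟨hx1, hx2⟩ := hXmem s hs
    obtain ⟨hy1, hy2⟩ := hYmem s hs
    constructor
    · simp only [hZ]; nlinarith
    · simp only [hZ]; nlinarith
  have hZ0 : Z 0 = a := by simp only [hZ, hX0, hY0]; ring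
  have hZ1 : Z 1 = b := by simp only [hZ, hX1, hY1]; ring
  have hsub : ∫ s in (0:ℝ)..1, Z' s • (wc ∘ Z) s = ∫ x in a..b, wc x := by
    rw [intervalIntegral.integral_comp_smul_deriv hZd hZ'c hwcont, hZ0, hZ1]
  have hZcont : ContinuousOn Z (Set.Icc (0:ℝ) 1) := by
    intro s hs
    exact (hZd s (huIcc ▸ hs)).continuousAt.continuousWithinAt
  have hmain : ∀ s ∈ Set.Icc (0:ℝ) 1, I ^ t * J ^ (1 - t) ≤ Z' s * wc (Z s) := by
    intro s hs
    have hx := hXmem s hs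
    have hy := hYmem s hs
    have hux := hupos _ hx
    have hvy := hvpos _ hy
    have key1 : u (X s) ^ t * v (Y s) ^ (1 - t) ≤ wc (Z s) := by
      rw [hwceq _ (hZmem s hs)]
      exact hyp _ hx _ hy
    have key2 : (I / u (X s)) ^ t * (J / v (Y s)) ^ (1 - t) ≤ Z' s := by
      exact Real.geom_mean_le_arith_mean2_weighted ht.le (by linarith)
        (div_nonneg hIpos.le hux.le) (div_nonneg hJpos.le hvy.le) (by ring)
    have hiden : I ^ t * J ^ (1 - t)
        = ((I / u (X s)) ^ t * (J / v (Y s)) ^ (1 - t)) * (u (X s) ^ t * v (Y s) ^ (1 - t)) := by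
      rw [Real.div_rpow hIpos.le hux.le, Real.div_rpow hJpos.le hvy.le]
      field_simp
    rw [hiden]
    have hA0 : 0 ≤ (I / u (X s)) ^ t * (J / v (Y s)) ^ (1 - t) := by positivity
    exact mul_le_mul key2 key1 (by positivity) (le_trans hA0 key2)
  have hlow : I ^ t * J ^ (1 - t) ≤ ∫ s in (0:ℝ)..1, Z' s • (wc ∘ Z) s := by
    have hInt2 : IntervalIntegrable (fun s => Z' s • (wc ∘ Z) s) volume 0 1 := by
      apply ContinuousOn.intervalIntegrable
      rw [huIcc]
      exact (hZ'c.mono (by rw [huIcc])).smul (hwcont.comp_continuousOn hZcont)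
    have := intervalIntegral.integral_mono_on zero_le_one
      (_root_.intervalIntegrable_const (c := I ^ t * J ^ (1 - t))) hInt2
      (fun s hs => by simpa [smul_eq_mul] using hmain s hs)
    simpa using this
  calc I ^ t * J ^ (1 - t) ≤ ∫ x in a..b, wc x := hsub ▸ hlow
    _ = ∫ x in a..b, w x := by
        apply intervalIntegral.integral_congr
        intro x hx
        exact hwceq x (by rwa [Set.uIcc_of_le hab.le] at hx)

lemma strong_convex_ineq (a b c : ℝ) (hab : a < b) (U U' U'' : ℝ → ℝ)
    (hU : ∀ x ∈ Set.Icc a b, HasDerivWithinAt U (U' x) (Set.Icc a b) x ∧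
      HasDerivWithinAt U' (U'' x) (Set.Icc a b) x ∧ c ≤ U'' x)
    {x y t : ℝ} (hx : x ∈ Set.Icc a b) (hy : y ∈ Set.Icc a b) (ht0 : 0 ≤ t) (ht1 : t ≤ 1) :
    U (t * x + (1 - t) * y) + c / 2 * (t * (1 - t) * (x - y) ^ 2)
      ≤ t * U x + (1 - t) * U y := by
  set V : ℝ → ℝ := fun z => U z - c / 2 * z ^ 2 with hV
  have hderivU : ∀ z ∈ Set.Ioo a b, HasDerivAt U (U' z) z := fun z hz =>
    ((hU z (Set.Ioo_subset_Icc_self hz)).1).hasDerivAt (Icc_mem_nhds hz.1 hz.2)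
  have hderivU' : ∀ z ∈ Set.Ioo a b, HasDerivAt U' (U'' z) z := fun z hz =>
    ((hU z (Set.Ioo_subset_Icc_self hz)).2.1).hasDerivAt (Icc_mem_nhds hz.1 hz.2)
  have hVd : ∀ z ∈ Set.Ioo a b, HasDerivAt V (U' z - c * z) z := by
    intro z hz
    have h2 : HasDerivAt (fun z : ℝ => c / 2 * z ^ 2) (c * z) z := by
      have := ((hasDerivAt_pow 2 z).const_mul (c / 2))
      exact this.congr_deriv (by norm_num; ring)
    exact (hderivU z hz).sub h2
  have hVconv : ConvexOn ℝ (Set.Icc a b) V := by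
    apply convexOn_of_deriv2_nonneg (convex_Icc a b)
    · -- continuity
      apply ContinuousOn.sub
      · exact fun z hz => ((hU z hz).1).continuousWithinAt
      · exact (continuous_const.mul (continuous_pow 2)).continuousOn
    · rw [interior_Icc]
      exact fun z hz => ((hVd z hz).differentiableAt).differentiableWithinAt
    · rw [interior_Icc]
      intro z hz
      have hEq : deriv V =ᶠ[nhds z] fun w => U' w - c * w :=
        Filter.eventuallyEq_of_mem (Ioo_mem_nhds hz.1 hz.2) (fun w hw => (hVd w hw).deriv)
      have hg : DifferentiableAt ℝ (fun w => U' w - c * w) z :=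
        ((hderivU' z hz).sub ((hasDerivAt_id z).const_mul c)).differentiableAt
      exact (hg.congr_of_eventuallyEq hEq).differentiableWithinAt
    · rw [interior_Icc]
      intro z hz
      have hEq : deriv V =ᶠ[nhds z] fun w => U' w - c * w :=
        Filter.eventuallyEq_of_mem (Ioo_mem_nhds hz.1 hz.2) (fun w hw => (hVd w hw).deriv)
      have h2 : deriv (deriv V) z = U'' z - c := by
        rw [hEq.deriv_eq]
        have : HasDerivAt (fun w => U' w - c * w) (U'' z - c) z := by
          exact ((hderivU' z hz).sub ((hasDerivAt_id z).const_mul c)).congr_deriv (by ring)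
        exact this.deriv
      simp only [Function.iterate_succ, Function.iterate_zero, Function.comp_apply, id_eq]
      rw [h2]
      linarith [(hU z (Set.Ioo_subset_Icc_self hz)).2.2]
  have := hVconv.2 hx hy ht0 (by linarith : (0:ℝ) ≤ 1 - t) (by ring)
  simp only [smul_eq_mul, hV] at this
  have hid : t * x ^ 2 + (1 - t) * y ^ 2 - (t * x + (1 - t) * y) ^ 2
      = t * (1 - t) * (x - y) ^ 2 := by ring
  nlinarith [this]

lemma integral_mu (a b : ℝ) (hab : a ≤ b) (U : ℝ → ℝ) (hUc : ContinuousOn U (Set.Icc a b))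
    (φ : ℝ → ℝ) (hφ : Continuous φ) :
    ∫ x, φ x ∂((volume.restrict (Set.Icc a b)).withDensity
      (fun x => ENNReal.ofReal (Real.exp (-U x))))
      = ∫ x in a..b, φ x * Real.exp (-U x) := by
  have hdc : ContinuousOn (fun x => Real.exp (-U x)) (Set.Icc a b) :=
    Real.continuous_exp.comp_continuousOn hUc.neg
  have hae : AEMeasurable (fun x => Real.toNNReal (Real.exp (-U x)))
      (volume.restrict (Set.Icc a b)) :=
    (continuous_real_toNNReal.comp_continuousOn hdc).aemeasurable measurableSet_Icc
  have h1 : (fun x => ENNReal.ofReal (Real.exp (-U x)))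
      = fun x => ((Real.toNNReal (Real.exp (-U x)) : ℝ≥0) : ℝ≥0∞) := rfl
  rw [h1, integral_withDensity_eq_integral_smul₀ hae φ]
  rw [intervalIntegral.integral_of_le hab, ← MeasureTheory.integral_Icc_eq_integral_Ioc]
  apply MeasureTheory.integral_congr_ae
  filter_upwards with x
  rw [NNReal.smul_def, smul_eq_mul, Real.coe_toNNReal _ (Real.exp_nonneg _), mul_comm]

/-- The entropy functional `Ent_μ(g) = ∫ g log g dμ − (∫ g dμ)·log(∫ g dμ)`. -/
noncomputable def entFun (μ : Measure ℝ) (g : ℝ → ℝ) : ℝ :=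
  (∫ x, g x * Real.log (g x) ∂μ) - (∫ x, g x ∂μ) * Real.log (∫ x, g x ∂μ)

/-- **Log-Sobolev-type entropy bound for strongly log-concave measures on an interval.**
If `μ` has density `e^{−U}` on `[a,b]` (and `0` outside) with `U'' ≥ c > 0` on `[a,b]`,
and `μ` is a probability measure, then for every continuously differentiable 1-Lipschitz
`f : ℝ → ℝ` and every `λ ≥ 0`, `Ent_μ(e^{λf}) ≤ (λ²/(2c))·∫ e^{λf} dμ`. -/
theorem entropy_exp_le_of_strongly_logConcave_on_Icc
    (a b c : ℝ) (hab : a < b) (hc : 0 < c)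
    (U U' U'' : ℝ → ℝ)
    (hU : ∀ x ∈ Set.Icc a b,
      HasDerivWithinAt U (U' x) (Set.Icc a b) x ∧
      HasDerivWithinAt U' (U'' x) (Set.Icc a b) x ∧ c ≤ U'' x)
    (μ : Measure ℝ)
    (hμ : μ = (volume.restrict (Set.Icc a b)).withDensity
      (fun x => ENNReal.ofReal (Real.exp (-U x))))
    (hprob : IsProbabilityMeasure μ)
    (f f' : ℝ → ℝ) (hf : ∀ x, HasDerivAt f (f' x) x) (hf' : Continuous f')
    (hlip : LipschitzWith 1 f)
    (l : ℝ) (hl : 0 ≤ l) :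
    entFun μ (fun x => Real.exp (l * f x))
      ≤ l ^ 2 / (2 * c) * ∫ x, Real.exp (l * f x) ∂μ := by
  classical
  set K : ℝ := l ^ 2 / (2 * c) with hK
  have hUc : ContinuousOn U (Set.Icc a b) := fun x hx => ((hU x hx).1).continuousWithinAt
  have hfc : Continuous f := continuous_iff_continuousAt.2 (fun x => (hf x).continuousAt)
  have translate : ∀ φ : ℝ → ℝ, Continuous φ →
      ∫ x, φ x ∂μ = ∫ x in a..b, φ x * Real.exp (-U x) := by
    intro φ hφ
    rw [hμ]
    exact integral_mu a b hab.le U hUc φ hφ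
  -- a.e. membership
  have haeIcc : ∀ᵐ x ∂μ, x ∈ Set.Icc a b := by
    rw [hμ]
    exact (withDensity_absolutelyContinuous _ _).ae_le (ae_restrict_mem measurableSet_Icc)
  -- bound for f on the interval
  obtain ⟨M, hM⟩ := (isCompact_Icc (a := a) (b := b)).exists_bound_of_continuousOn
    hfc.continuousOn
  have hM0 : 0 ≤ M := le_trans (norm_nonneg (f a)) (hM a ⟨le_refl a, hab.le⟩)
  set Λ : ℝ → ℝ := fun s => ∫ x, Real.exp (s * (l * f x)) ∂μ with hΛ
  have habs : ∀ s : ℝ, ∀ x ∈ Set.Icc a b, |s * (l * f x)| ≤ |s| * (l * M) := by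
    intro s x hx
    rw [abs_mul, abs_mul]
    apply mul_le_mul_of_nonneg_left _ (abs_nonneg s)
    rw [abs_of_nonneg hl]
    exact mul_le_mul_of_nonneg_left (hM x hx) hl
  have hint : ∀ s : ℝ, Integrable (fun x => Real.exp (s * (l * f x))) μ := by
    intro s
    apply Integrable.mono' (integrable_const (Real.exp (|s| * (l * M))))
    · exact (Real.continuous_exp.comp ((continuous_const.mul
        (continuous_const.mul hfc)))).aestronglyMeasurable
    · filter_upwards [haeIcc] with x hx
      rw [Real.norm_eq_abs, abs_of_nonneg (Real.exp_nonneg _)]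
      exact Real.exp_le_exp.2 (le_trans (le_abs_self _) (habs s x hx))
  have hΛpos : ∀ s : ℝ, 0 < Λ s := by
    intro s
    have h1 : ∀ᵐ x ∂μ, Real.exp (-(|s| * (l * M))) ≤ Real.exp (s * (l * f x)) := by
      filter_upwards [haeIcc] with x hx
      exact Real.exp_le_exp.2 (neg_le_of_abs_le (habs s x hx))
    have h2 := integral_mono_ae (integrable_const _) (hint s) h1
    have h3 : ∫ _x, Real.exp (-(|s| * (l * M))) ∂μ = Real.exp (-(|s| * (l * M))) := by
      simp [measure_univ]
    rw [h3] at h2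
    exact lt_of_lt_of_le (Real.exp_pos _) h2
  -- Claim A : the Prékopa–Leindler consequence
  have claimA : ∀ s ∈ Set.Ioo (0:ℝ) 1,
      Real.log (Λ 1) - Real.log (Λ s) / s ≤ K * (1 - s) := by
    intro s hs
    obtain ⟨hs0, hs1⟩ := hs
    have ht : 0 < 1 - s := by linarith
    have hKc : 2 * c * K = l ^ 2 := by rw [hK]; field_simp
    have h1s : 1 - (1 - s) = s := by ring
    have hypPL : ∀ x ∈ Set.Icc a b, ∀ y ∈ Set.Icc a b,
        Real.exp (-U x) ^ (1 - s) * Real.exp (l * f y - U y) ^ (1 - (1 - s))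
          ≤ Real.exp (s * (l * f ((1 - s) * x + (1 - (1 - s)) * y))
              + (1 - s) * s * K - U ((1 - s) * x + (1 - (1 - s)) * y)) := by
      intro x hx y hy
      rw [h1s]
      have hconv := strong_convex_ineq a b c hab U U' U'' hU hx hy ht.le (by linarith)
      rw [h1s] at hconv
      set z : ℝ := (1 - s) * x + s * y with hz
      rw [Real.rpow_def_of_pos (Real.exp_pos _), Real.rpow_def_of_pos (Real.exp_pos _),
        Real.log_exp, Real.log_exp, ← Real.exp_add]
      apply Real.exp_le_exp.2
      have hlipyz : |f y - f z| ≤ |y - z| := by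
        have h5 := hlip.dist_le_mul y z
        simpa [Real.dist_eq] using h5
      have hyz : |y - z| = (1 - s) * |y - x| := by
        have h6 : y - z = (1 - s) * (y - x) := by rw [hz]; ring
        rw [h6, abs_mul, abs_of_pos ht]
      have hbase : l * |y - x| ≤ K + c / 2 * (y - x) ^ 2 := by
        have h8 : (y - x) ^ 2 = |y - x| ^ 2 := (sq_abs (y - x)).symm
        rw [h8]
        have h9 : 2 * c * (l * |y - x|) ≤ 2 * c * (K + c / 2 * |y - x| ^ 2) := by
          nlinarith [sq_nonneg (c * |y - x| - l), hKc]
        exact (mul_le_mul_iff_right₀ (by positivity : (0:ℝ) < 2 * c)).1 h9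
      have key : l * (f y - f z) ≤ (1 - s) * (K + c / 2 * (y - x) ^ 2) :=
        calc l * (f y - f z) ≤ l * |y - z| :=
              mul_le_mul_of_nonneg_left (le_trans (le_abs_self _) hlipyz) hl
          _ = (1 - s) * (l * |y - x|) := by rw [hyz]; ring
          _ ≤ (1 - s) * (K + c / 2 * (y - x) ^ 2) :=
              mul_le_mul_of_nonneg_left hbase ht.le
      have key2 := mul_le_mul_of_nonneg_left key hs0.le
      have hsq : (x - y) ^ 2 = (y - x) ^ 2 := by ring
      nlinarith [hconv, key2]
    have hpl := pl_one_dim a b (1 - s) hab ht (by linarith)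
      (fun x => Real.exp (-U x))
      (fun x => Real.exp (l * f x - U x))
      (fun x => Real.exp (s * (l * f x) + (1 - s) * s * K - U x))
      (Real.continuous_exp.comp_continuousOn hUc.neg)
      (Real.continuous_exp.comp_continuousOn
        ((continuous_const.mul hfc).continuousOn.sub hUc))
      (Real.continuous_exp.comp_continuousOn
        (((continuous_const.mul (continuous_const.mul hfc)).add
          continuous_const).continuousOn.sub hUc))
      (fun x _ => Real.exp_pos _) (fun x _ => Real.exp_pos _) hypPL
    have hIu : ∫ x in a..b, Real.exp (-U x) = 1 := by
      have h2 := translate (fun _ => (1:ℝ)) continuous_const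
      simp only [one_mul] at h2
      rw [← h2]
      simp [measure_univ]
    have hIv : ∫ x in a..b, Real.exp (l * f x - U x) = Λ 1 := by
      have h2 := translate (fun x => Real.exp (l * f x))
        (Real.continuous_exp.comp (continuous_const.mul hfc))
      rw [hΛ]
      simp only [one_mul]
      rw [h2]
      apply intervalIntegral.integral_congr
      intro x _
      show Real.exp (l * f x - U x) = Real.exp (l * f x) * Real.exp (-U x)
      rw [← Real.exp_add, sub_eq_add_neg]
    have hIw : ∫ x in a..b, Real.exp (s * (l * f x) + (1 - s) * s * K - U x)
        = Real.exp ((1 - s) * s * K) * Λ s := by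
      have hΛs : Λ s = ∫ x in a..b, Real.exp (s * (l * f x)) * Real.exp (-U x) :=
        translate (fun x => Real.exp (s * (l * f x)))
          (Real.continuous_exp.comp (continuous_const.mul (continuous_const.mul hfc)))
      rw [hΛs, ← intervalIntegral.integral_const_mul]
      apply intervalIntegral.integral_congr
      intro x _
      show Real.exp (s * (l * f x) + (1 - s) * s * K - U x)
          = Real.exp ((1 - s) * s * K) * (Real.exp (s * (l * f x)) * Real.exp (-U x))
      rw [← Real.exp_add, ← Real.exp_add]
      congr 1
      ring
    rw [hIu, hIv, hIw, Real.one_rpow, h1s, one_mul] at hpl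
    have hlog := Real.log_le_log (Real.rpow_pos_of_pos (hΛpos 1) s) hpl
    rw [Real.log_rpow (hΛpos 1), Real.log_mul (Real.exp_ne_zero _) (hΛpos s).ne',
      Real.log_exp] at hlog
    have h3 : (Real.log (Λ 1) - K * (1 - s)) * s ≤ Real.log (Λ s) := by nlinarith [hlog]
    have h4 := (le_div_iff₀ hs0).2 h3
    linarith
  -- Claim B : differentiability of Λ
  have claimB : HasDerivAt Λ (∫ x, Real.exp (1 * (l * f x)) * (l * f x) ∂μ) 1 := by
    have hder := hasDerivAt_integral_of_dominated_loc_of_deriv_le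
      (F := fun (s : ℝ) (x : ℝ) => Real.exp (s * (l * f x)))
      (F' := fun (s : ℝ) (x : ℝ) => Real.exp (s * (l * f x)) * (l * f x))
      (μ := μ) (x₀ := 1) (s := Metric.ball 1 1)
      (bound := fun _ => Real.exp (2 * (l * M)) * (l * M)) (Metric.ball_mem_nhds 1 one_pos)
      (Filter.Eventually.of_forall (fun s => (Real.continuous_exp.comp
        (continuous_const.mul (continuous_const.mul hfc))).aestronglyMeasurable))
      (hint 1)
      ((Real.continuous_exp.comp (continuous_const.mul
        (continuous_const.mul hfc))).mul
        (continuous_const.mul hfc) |>.aestronglyMeasurable)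
      ?_ (integrable_const _) ?_
    · exact hder.2
    · filter_upwards [haeIcc] with x hx
      intro s hsb
      rw [Metric.mem_ball, Real.dist_eq] at hsb
      have hs2 : |s| ≤ 2 := by
        have := abs_sub_abs_le_abs_sub s 1
        rw [abs_one] at this
        linarith
      have hb1 : |s * (l * f x)| ≤ 2 * (l * M) := by
        have := habs s x hx
        have h7 : |s| * (l * M) ≤ 2 * (l * M) := by
          apply mul_le_mul_of_nonneg_right hs2 (mul_nonneg hl hM0)
        linarith
      rw [norm_mul, Real.norm_eq_abs, Real.norm_eq_abs,
        abs_of_nonneg (Real.exp_nonneg _)]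
      apply mul_le_mul _ _ (abs_nonneg _) (Real.exp_nonneg _)
      · exact Real.exp_le_exp.2 (le_trans (le_abs_self _) hb1)
      · have := habs 1 x hx
        rw [abs_one, one_mul, one_mul] at this
        exact this
    · filter_upwards with x
      intro s _
      exact (hasDerivAt_mul_const (l * f x)).exp
  set D : ℝ := ∫ x, Real.exp (1 * (l * f x)) * (l * f x) ∂μ with hD
  -- limit argument
  have hkey : D / Λ 1 - Real.log (Λ 1) ≤ K := by
    have hlog : HasDerivAt (fun s => Real.log (Λ s)) (D / Λ 1) 1 := claimB.log (hΛpos 1).ne'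
    have hslope : Filter.Tendsto (slope (fun s => Real.log (Λ s)) 1)
        (nhdsWithin 1 {(1:ℝ)}ᶜ) (nhds (D / Λ 1)) := hasDerivAt_iff_tendsto_slope.1 hlog
    have hL : Filter.Tendsto (slope (fun s => Real.log (Λ s)) 1)
        (nhdsWithin 1 (Set.Iio 1)) (nhds (D / Λ 1)) :=
      hslope.mono_left (nhdsWithin_mono 1 (fun x hx => ne_of_lt hx))
    have hid : Filter.Tendsto (fun s : ℝ => s) (nhdsWithin 1 (Set.Iio 1)) (nhds 1) :=
      tendsto_id.mono_left nhdsWithin_le_nhds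
    have hT := ((hL.sub_const (Real.log (Λ 1))).div hid one_ne_zero)
    rw [div_one] at hT
    have hmem : Set.Ioo (0:ℝ) 1 ∈ nhdsWithin (1:ℝ) (Set.Iio 1) :=
      Ioo_mem_nhdsLT_of_mem ⟨zero_lt_one, le_refl 1⟩
    have heq : ∀ᶠ s in nhdsWithin (1:ℝ) (Set.Iio 1),
        (slope (fun s => Real.log (Λ s)) 1 s - Real.log (Λ 1)) / s
          = (Real.log (Λ 1) - Real.log (Λ s) / s) / (1 - s) := by
      filter_upwards [hmem] with s hs
      obtain ⟨hs0, hs1⟩ := hs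
      have hs0' : s ≠ 0 := ne_of_gt hs0
      have hs1' : s - 1 ≠ 0 := by intro h; apply absurd hs1; simp [sub_eq_zero] at h; simp [h]
      have hs1'' : 1 - s ≠ 0 := by intro h; apply hs1'; linarith [sub_eq_zero.1 h]
      rw [slope_def_field]
      field_simp
      ring
    have hT2 : Filter.Tendsto (fun s => (Real.log (Λ 1) - Real.log (Λ s) / s) / (1 - s))
        (nhdsWithin 1 (Set.Iio 1)) (nhds (D / Λ 1 - Real.log (Λ 1))) := hT.congr' heq
    apply le_of_tendsto hT2
    filter_upwards [hmem] with s hs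
    rw [div_le_iff₀ (by linarith [hs.2] : (0:ℝ) < 1 - s)]
    exact claimA s hs
  -- conclusion
  have hΛ1 : Λ 1 = ∫ x, Real.exp (l * f x) ∂μ := by simp only [hΛ, one_mul]
  have hE : entFun μ (fun x => Real.exp (l * f x)) = D - Λ 1 * Real.log (Λ 1) := by
    rw [entFun, hΛ1.symm, hD]
    congr 1
    apply MeasureTheory.integral_congr_ae
    filter_upwards with x
    rw [Real.log_exp, one_mul]
  rw [hE, ← hΛ1]
  have := mul_le_mul_of_nonneg_right hkey (hΛpos 1).le
  have hne : Λ 1 ≠ 0 := (hΛpos 1).ne'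
  rw [sub_mul, div_mul_cancel₀ _ hne] at this
  linarith
end

section
/- Let 𝒳 and 𝒯 be measurable spaces, let c > 0, and let μ, μ' be probability measures on 𝒳 with μ(A) ≥ c·μ'(A) for every measurable set A. Then for every Markov kernel κ from 𝒳 to 𝒯: ∫ KL(κ(x) ‖ μ⋆κ) dμ(x) ≥ c·∫ KL(κ(x) ‖ μ'⋆κ) dμ'(x). (In mutual-information terms: if Π(X) is a randomized function of X, then I(X; Π(X)) for X ∼ μ is at least c times I(X'; Π(X')) for X' ∼ μ'.) -/
open MeasureTheory ProbabilityTheory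
open scoped ENNReal NNReal Classical

/-- Kullback–Leibler divergence `KL(ν‖μ) = ∫ log (dν/dμ) dν` if `ν ≪ μ` (and the
log-likelihood ratio is integrable), and `+∞` otherwise. -/
noncomputable def klDiv {α : Type*} [MeasurableSpace α] (ν μ : Measure α) : ℝ≥0∞ :=
  if ν ≪ μ ∧ Integrable (fun x => Real.log ((ν.rnDeriv μ x).toReal)) ν
  then ENNReal.ofReal (∫ x, Real.log ((ν.rnDeriv μ x).toReal) ∂ν)
  else ⊤

lemma klDiv_eq_llr {α : Type*} [MeasurableSpace α] (ν μ : Measure α) :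
    klDiv ν μ = if ν ≪ μ ∧ Integrable (llr ν μ) ν
      then ENNReal.ofReal (∫ x, llr ν μ x ∂ν) else ⊤ := rfl

/-- Gibbs' inequality: the KL integrand has nonnegative integral. -/
lemma gibbs_nonneg {α : Type*} [MeasurableSpace α] (p q : Measure α)
    [IsProbabilityMeasure p] [IsProbabilityMeasure q]
    (hpq : p ≪ q) (hint : Integrable (llr p q) p) :
    0 ≤ ∫ x, llr p q x ∂p := by
  set w : α → ℝ := fun x => ((p.rnDeriv q x).toReal)⁻¹ with hw
  have hw_meas : Measurable w := (Measure.measurable_rnDeriv p q).ennreal_toReal.inv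
  have hw_nn : 0 ≤ᵐ[p] w := .of_forall fun x => by positivity
  -- lintegral bound
  have h_lint : ∫⁻ x, ENNReal.ofReal (w x) ∂p ≤ 1 := by
    conv_lhs => rw [← Measure.withDensity_rnDeriv_eq p q hpq]
    rw [lintegral_withDensity_eq_lintegral_mul q (Measure.measurable_rnDeriv p q)
      (hw_meas.ennreal_ofReal)]
    calc ∫⁻ x, ((p.rnDeriv q) * fun x => ENNReal.ofReal (w x)) x ∂q
        ≤ ∫⁻ _, 1 ∂q := by
          refine lintegral_mono_ae ?_
          filter_upwards [Measure.rnDeriv_lt_top p q] with x hx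
          simp only [Pi.mul_apply]
          rcases eq_or_ne (p.rnDeriv q x) 0 with h0 | h0
          · simp [hw, h0]
          · have htR : (0:ℝ) < (p.rnDeriv q x).toReal := ENNReal.toReal_pos h0 hx.ne
            rw [hw]
            rw [ENNReal.ofReal_inv_of_pos htR, ENNReal.ofReal_toReal hx.ne]
            rw [ENNReal.mul_inv_cancel h0 hx.ne]
      _ = 1 := by simp
  have hw_int : Integrable w p := by
    refine ⟨hw_meas.aestronglyMeasurable, ?_⟩
    rw [hasFiniteIntegral_iff_ofReal hw_nn]
    exact lt_of_le_of_lt h_lint ENNReal.one_lt_top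
  have h_ptwise : ∀ᵐ x ∂p, -llr p q x ≤ w x - 1 := by
    filter_upwards [Measure.rnDeriv_pos hpq, hpq.ae_le (Measure.rnDeriv_lt_top p q)]
      with x hx_pos hx_lt
    have htR : (0:ℝ) < (p.rnDeriv q x).toReal := ENNReal.toReal_pos hx_pos.ne' hx_lt.ne
    have := Real.log_le_sub_one_of_pos (inv_pos.mpr htR)
    rw [Real.log_inv] at this
    simpa [llr, hw] using this
  have h1 : ∫ x, -llr p q x ∂p ≤ ∫ x, (w x - 1) ∂p :=
    integral_mono_ae hint.neg (hw_int.sub (integrable_const 1)) h_ptwise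
  have h2 : ∫ x, (w x - 1) ∂p = (∫ x, w x ∂p) - 1 := by
    rw [integral_sub hw_int (integrable_const 1)]; simp
  have h3 : ∫ x, w x ∂p ≤ 1 := by
    rw [integral_eq_lintegral_of_nonneg_ae hw_nn hw_meas.aestronglyMeasurable]
    calc (∫⁻ x, ENNReal.ofReal (w x) ∂p).toReal ≤ (1:ℝ≥0∞).toReal :=
          ENNReal.toReal_mono ENNReal.one_ne_top h_lint
      _ = 1 := by simp
  rw [integral_neg] at h1
  linarith

/-- `s * (-log s + M) ≤ exp (M - 1)` for `s > 0`. -/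
lemma mul_neg_log_add_le {M s : ℝ} (hs : 0 < s) :
    s * (-Real.log s + M) ≤ Real.exp (M - 1) := by
  have h := Real.log_le_sub_one_of_pos (x := Real.exp (M - 1) / s) (by positivity)
  rw [Real.log_div (Real.exp_ne_zero _) hs.ne', Real.log_exp] at h
  have h2 : -Real.log s + M ≤ Real.exp (M - 1) / s := by linarith
  calc s * (-Real.log s + M) ≤ s * (Real.exp (M - 1) / s) :=
        mul_le_mul_of_nonneg_left h2 hs.le
    _ = Real.exp (M - 1) := by field_simp

/-- If `μ ≥ c·μ'` then the mutual information `I(X;Π(X)) = ∫ KL(κ(x) ‖ μ⋆κ) dμ(x)` for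
`X ∼ μ` is at least `c` times the mutual information for `X' ∼ μ'`. -/
theorem mutualInfo_ge_of_measure_ge
    {X T : Type*} [MeasurableSpace X] [MeasurableSpace T]
    (c : ℝ) (hc : 0 < c) (μ μ' : Measure X)
    [IsProbabilityMeasure μ] [IsProbabilityMeasure μ']
    (hle : ∀ A : Set X, MeasurableSet A → ENNReal.ofReal c * μ' A ≤ μ A)
    (κ : Kernel X T) [IsMarkovKernel κ] :
    ENNReal.ofReal c * ∫⁻ x, klDiv (κ x) (μ'.bind (fun y => κ y)) ∂μ'
      ≤ ∫⁻ x, klDiv (κ x) (μ.bind (fun y => κ y)) ∂μ := by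
  have hκ_meas : Measurable fun y => (κ y : Measure T) := κ.measurable
  set ν : Measure T := μ.bind (fun y => κ y) with hν
  set η : Measure T := μ'.bind (fun y => κ y) with hη
  haveI : IsProbabilityMeasure ν := ⟨by
    rw [hν, Measure.bind_apply MeasurableSet.univ hκ_meas.aemeasurable]; simp⟩
  haveI : IsProbabilityMeasure η := ⟨by
    rw [hη, Measure.bind_apply MeasurableSet.univ hκ_meas.aemeasurable]; simp⟩
  have hc0 : ENNReal.ofReal c ≠ 0 := (ENNReal.ofReal_pos.mpr hc).ne'
  have hμle : ENNReal.ofReal c • μ' ≤ μ := by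
    rw [Measure.le_iff]
    intro s hs
    simpa using hle s hs
  have hbind_le : ENNReal.ofReal c • η ≤ ν := by
    rw [Measure.le_iff]
    intro s hs
    rw [Measure.smul_apply, smul_eq_mul, hη, hν,
      Measure.bind_apply hs hκ_meas.aemeasurable, Measure.bind_apply hs hκ_meas.aemeasurable,
      ← smul_eq_mul, ← lintegral_smul_measure]
    exact lintegral_mono' hμle le_rfl
  have hην : η ≪ ν := by
    refine Measure.AbsolutelyContinuous.mk fun s hs h0 => ?_
    have := hbind_le s
    rw [h0, Measure.smul_apply, smul_eq_mul, nonpos_iff_eq_zero, mul_eq_zero] at this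
    exact this.resolve_left hc0
  set cinv : ℝ≥0∞ := (ENNReal.ofReal c)⁻¹ with hcinv
  have hcinv_ne_top : cinv ≠ ⊤ := by simp [hcinv, hc0]
  set g : T → ℝ≥0∞ := η.rnDeriv ν with hg
  have hg_meas : Measurable g := Measure.measurable_rnDeriv η ν
  have hg_le : g ≤ᵐ[ν] fun _ => cinv := by
    have h1 : (ENNReal.ofReal c • η).rnDeriv ν ≤ᵐ[ν] 1 := Measure.rnDeriv_le_one_of_le hbind_le
    have h2 : (ENNReal.ofReal c • η).rnDeriv ν =ᵐ[ν] ENNReal.ofReal c • η.rnDeriv ν :=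
      Measure.rnDeriv_smul_left_of_ne_top η ν ENNReal.ofReal_ne_top
    filter_upwards [h1, h2] with t h1 h2
    rw [h2] at h1
    simp only [Pi.smul_apply, smul_eq_mul, Pi.one_apply] at h1
    exact ENNReal.le_inv_iff_mul_le.mpr (by rwa [mul_comm])
  -- constants
  set M : ℝ := max 0 (-Real.log c) with hM
  have hM0 : 0 ≤ M := le_max_left _ _
  set G : T → ℝ := fun t => -Real.log ((g t).toReal) with hG
  have hG_eq : G = fun t => -llr η ν t := rfl
  have hG_meas : Measurable G := (hg_meas.ennreal_toReal.log).neg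
  -- on {g ≤ cinv}, 0 ≤ G + M
  have hGM_nonneg : ∀ t, g t ≤ cinv → 0 ≤ G t + M := by
    intro t ht
    rcases eq_or_lt_of_le (ENNReal.toReal_nonneg (a := g t)) with h0 | h0
    · simp [hG, ← h0, hM0]
    · have : (g t).toReal ≤ c⁻¹ := by
        have := ENNReal.toReal_mono hcinv_ne_top ht
        rwa [hcinv, ENNReal.toReal_inv, ENNReal.toReal_ofReal hc.le] at this
      have hlog : Real.log ((g t).toReal) ≤ -Real.log c := by
        rw [← Real.log_inv]
        exact Real.log_le_log h0 this
      have : Real.log ((g t).toReal) ≤ M := hlog.trans (le_max_right _ _)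
      simp only [hG]; linarith
  -- product bound: ofReal (G t + M) * g t ≤ exp (M - 1)
  have h_prod_bound : ∀ t, g t ≤ cinv → ENNReal.ofReal (G t + M) * g t
      ≤ ENNReal.ofReal (Real.exp (M - 1)) := by
    intro t ht
    have hgt_ne_top : g t ≠ ⊤ := (lt_of_le_of_lt ht hcinv_ne_top.lt_top).ne
    rcases eq_or_lt_of_le (ENNReal.toReal_nonneg (a := g t)) with h0 | h0
    · have : g t = 0 := by
        rcases ENNReal.toReal_eq_zero_iff (g t) |>.mp h0.symm with h | h
        · exact h
        · exact absurd h hgt_ne_top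
      simp [this]
    · have h1 : G t + M ≤ Real.exp (M - 1) / (g t).toReal := by
        have := mul_neg_log_add_le (M := M) h0
        rw [hG]
        rw [div_eq_inv_mul, ← mul_le_mul_iff_right₀ h0, ← mul_assoc, mul_inv_cancel₀ h0.ne', one_mul]
        exact this
      calc ENNReal.ofReal (G t + M) * g t
          ≤ ENNReal.ofReal (Real.exp (M - 1) / (g t).toReal) * ENNReal.ofReal ((g t).toReal) := by
            rw [ENNReal.ofReal_toReal hgt_ne_top]
            exact mul_le_mul_left (ENNReal.ofReal_le_ofReal h1) _
        _ = ENNReal.ofReal (Real.exp (M - 1) / (g t).toReal * (g t).toReal) :=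
            (ENNReal.ofReal_mul (by positivity)).symm
        _ = ENNReal.ofReal (Real.exp (M - 1)) := by
            rw [div_mul_cancel₀ _ h0.ne']
  -- ∫⁻ ofReal (G + M) dη is finite
  have hlint_GM_η : ∫⁻ t, ENNReal.ofReal (G t + M) ∂η ≤ ENNReal.ofReal (Real.exp (M - 1)) := by
    conv_lhs => rw [← Measure.withDensity_rnDeriv_eq η ν hην]
    rw [lintegral_withDensity_eq_lintegral_mul ν (Measure.measurable_rnDeriv η ν)
      ((hG_meas.add_const M).ennreal_ofReal)]
    calc ∫⁻ t, (η.rnDeriv ν * fun t => ENNReal.ofReal (G t + M)) t ∂ν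
        ≤ ∫⁻ _, ENNReal.ofReal (Real.exp (M - 1)) ∂ν := by
          refine lintegral_mono_ae ?_
          filter_upwards [hg_le] with t ht
          simp only [Pi.mul_apply]
          rw [mul_comm]
          exact h_prod_bound t ht
      _ = ENNReal.ofReal (Real.exp (M - 1)) := by simp
  -- G is integrable wrt η
  have hGM_nonneg_η : 0 ≤ᵐ[η] fun t => G t + M := by
    filter_upwards [hην.ae_le hg_le] with t ht using hGM_nonneg t ht
  have hG_int_η : Integrable G η := by
    refine ⟨hG_meas.aestronglyMeasurable, ?_⟩
    rw [hasFiniteIntegral_iff_norm]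
    calc ∫⁻ t, ENNReal.ofReal ‖G t‖ ∂η
        ≤ ∫⁻ t, ENNReal.ofReal ((G t + M) + M) ∂η := by
          refine lintegral_mono_ae ?_
          filter_upwards [hGM_nonneg_η] with t ht
          have ht' : 0 ≤ G t + M := ht
          refine ENNReal.ofReal_le_ofReal ?_
          rw [Real.norm_eq_abs, abs_le]
          constructor <;> linarith
      _ ≤ ∫⁻ t, (ENNReal.ofReal (G t + M) + ENNReal.ofReal M) ∂η :=
          lintegral_mono fun t => ENNReal.ofReal_add_le
      _ = (∫⁻ t, ENNReal.ofReal (G t + M) ∂η) + ENNReal.ofReal M := by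
          rw [lintegral_add_right _ measurable_const, lintegral_const, measure_univ, mul_one]
      _ < ⊤ := ENNReal.add_lt_top.mpr
          ⟨lt_of_le_of_lt hlint_GM_η ENNReal.ofReal_lt_top, ENNReal.ofReal_lt_top⟩
  -- ∫ G dη ≤ 0 (Gibbs)
  have hllr_eq : llr η ν =ᵐ[η] fun t => -G t :=
    Filter.Eventually.of_forall fun t => by simp [hG, llr, hg]
  have hG_integral_η : ∫ t, G t ∂η ≤ 0 := by
    have h := gibbs_nonneg η ν hην (hG_int_η.neg.congr hllr_eq.symm)
    have h2 : ∫ t, llr η ν t ∂η = -∫ t, G t ∂η := by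
      rw [← integral_neg]
      exact integral_congr_ae hllr_eq
    rw [h2] at h
    linarith
  -- the lintegral of Bp over μ'
  set Bp : X → ℝ≥0∞ := fun x => ∫⁻ t, ENNReal.ofReal (G t + M) ∂(κ x) with hBp
  have hBp_meas : Measurable Bp :=
    Measurable.lintegral_kernel_prod_right
      (((hG_meas.add_const M).ennreal_ofReal).comp measurable_snd)
  have hBp_lint : ∫⁻ x, Bp x ∂μ' = ∫⁻ t, ENNReal.ofReal (G t + M) ∂η := by
    rw [hη, Measure.lintegral_bind hκ_meas.aemeasurable ((hG_meas.add_const M).ennreal_ofReal.aemeasurable)]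
  -- null sets transferred to κ x for a.e. x
  have h_ae_null : ∀ (N : Set T), MeasurableSet N → η N = 0 → ∀ᵐ x ∂μ', κ x N = 0 := by
    intro N hN h0
    have h1 : ∫⁻ x, κ x N ∂μ' = 0 := by
      rw [← Measure.bind_apply hN hκ_meas.aemeasurable, ← hη, h0]
    exact (lintegral_eq_zero_iff (κ.measurable_coe hN)).mp h1
  -- (a) a.e. x, κ x {g = 0} = 0
  have hset_g0 : MeasurableSet {t | g t = 0} := hg_meas (measurableSet_singleton 0)
  have h_a : ∀ᵐ x ∂μ', κ x {t | g t = 0} = 0 := by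
    refine h_ae_null _ hset_g0 ?_
    rw [← Measure.setLIntegral_rnDeriv hην]
    rw [setLIntegral_congr_fun hset_g0 (fun t ht => ht)]
    simp
  -- (b) a.e. x, κ x {cinv < g} = 0
  have hset_gt : MeasurableSet {t | cinv < g t} := measurableSet_lt measurable_const hg_meas
  have h_b : ∀ᵐ x ∂μ', κ x {t | cinv < g t} = 0 := by
    refine h_ae_null _ hset_gt (hην ?_)
    have h := ae_iff.mp hg_le
    simpa [not_le] using h
  -- pointwise a.e. inequality
  have h_ptwise : ∀ᵐ x ∂μ',
      klDiv (κ x) η + ENNReal.ofReal M ≤ klDiv (κ x) ν + Bp x := by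
    filter_upwards [h_a, h_b] with x hxa hxb
    by_cases hx : (κ x) ≪ ν ∧ Integrable (llr (κ x) ν) (κ x)
    swap
    · rw [klDiv_eq_llr (κ x) ν, if_neg hx, top_add]
      exact le_top
    obtain ⟨hac, hint⟩ := hx
    by_cases hBx : Bp x = ⊤
    · rw [hBx, add_top]
      exact le_top
    -- a.e.[κ x] facts
    have hae_g_le : ∀ᵐ t ∂(κ x), g t ≤ cinv := by
      rw [ae_iff]
      convert hxb using 2
      ext t
      simp [not_le]
    have hae_g_pos : ∀ᵐ t ∂(κ x), g t ≠ 0 := by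
      rw [ae_iff]
      convert hxa using 2
      ext t
      simp
    -- G + M nonneg a.e. κ x and integrable
    have hGM_nn_κ : 0 ≤ᵐ[κ x] fun t => G t + M := by
      filter_upwards [hae_g_le] with t ht using hGM_nonneg t ht
    have hGM_int_κ : Integrable (fun t => G t + M) (κ x) := by
      refine ⟨(hG_meas.add_const M).aestronglyMeasurable, ?_⟩
      rw [hasFiniteIntegral_iff_norm]
      have h1 : ∫⁻ t, ENNReal.ofReal ‖G t + M‖ ∂(κ x) = Bp x := by
        refine lintegral_congr_ae ?_
        filter_upwards [hGM_nn_κ] with t ht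
        have ht' : 0 ≤ G t + M := ht
        rw [Real.norm_eq_abs, abs_of_nonneg ht']
      rw [h1]
      exact lt_top_iff_ne_top.mpr hBx
    have hG_int_κ : Integrable G (κ x) := by
      have h2 := hGM_int_κ.sub (integrable_const M)
      exact h2.congr (Filter.Eventually.of_forall fun t => by simp)
    -- κ x ≪ η
    have hκη : (κ x) ≪ η := by
      refine Measure.AbsolutelyContinuous.mk fun E hE h0 => ?_
      have h1 : ∫⁻ t in E, g t ∂ν = 0 := by
        rw [Measure.setLIntegral_rnDeriv hην E]
        exact h0
      have h2 : ν.restrict E {t | g t ≠ 0} = 0 := by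
        have h3 : ∀ᵐ t ∂(ν.restrict E), g t = 0 :=
          (lintegral_eq_zero_iff hg_meas).mp h1
        exact ae_iff.mp h3
      rw [Measure.restrict_apply
        (show MeasurableSet {t | g t ≠ 0} from hg_meas ((measurableSet_singleton 0).compl))]
        at h2
      have h4 : κ x ({t | g t ≠ 0} ∩ E) = 0 := hac h2
      have h5 : E ⊆ ({t | g t ≠ 0} ∩ E) ∪ {t | g t = 0} := by
        intro t ht
        by_cases hgt : g t = 0
        · exact Or.inr hgt
        · exact Or.inl ⟨hgt, ht⟩
      refine le_antisymm ?_ zero_le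
      calc κ x E ≤ κ x (({t | g t ≠ 0} ∩ E) ∪ {t | g t = 0}) := measure_mono h5
        _ ≤ κ x ({t | g t ≠ 0} ∩ E) + κ x {t | g t = 0} := measure_union_le _ _
        _ = 0 := by rw [h4, hxa, add_zero]
    -- llr decomposition
    have h_decomp : llr (κ x) η =ᵐ[κ x] fun t => llr (κ x) ν t + G t := by
      have hmul : (κ x).rnDeriv η * η.rnDeriv ν =ᵐ[ν] (κ x).rnDeriv ν :=
        Measure.rnDeriv_mul_rnDeriv hκη
      filter_upwards [hac.ae_le hmul, Measure.rnDeriv_pos hac,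
        hac.ae_le (Measure.rnDeriv_lt_top (κ x) ν), hκη.ae_le (Measure.rnDeriv_lt_top (κ x) η),
        hae_g_pos, hae_g_le] with t hmul_t hpos hlt hltη hg0 hgle
      have hgfin : g t ≠ ⊤ := (lt_of_le_of_lt hgle hcinv_ne_top.lt_top).ne
      have hgR : 0 < (g t).toReal := ENNReal.toReal_pos hg0 hgfin
      have hEq : ((κ x).rnDeriv ν t).toReal = ((κ x).rnDeriv η t).toReal * (g t).toReal := by
        rw [← ENNReal.toReal_mul, ← hmul_t]
        rfl
      have hνR : 0 < ((κ x).rnDeriv ν t).toReal := ENNReal.toReal_pos hpos.ne' hlt.ne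
      have hηR : 0 < ((κ x).rnDeriv η t).toReal := by
        nlinarith [ENNReal.toReal_nonneg (a := (κ x).rnDeriv η t)]
      show llr (κ x) η t = llr (κ x) ν t + G t
      rw [llr, llr, hG]
      simp only
      rw [hEq, Real.log_mul hηR.ne' hgR.ne']
      ring
    have hllr_int_κ : Integrable (llr (κ x) η) (κ x) :=
      (hint.add hG_int_κ).congr h_decomp.symm
    have hL : klDiv (κ x) η = ENNReal.ofReal (∫ t, llr (κ x) η t ∂(κ x)) := by
      rw [klDiv_eq_llr, if_pos ⟨hκη, hllr_int_κ⟩]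
    have hR : klDiv (κ x) ν = ENNReal.ofReal (∫ t, llr (κ x) ν t ∂(κ x)) := by
      rw [klDiv_eq_llr, if_pos ⟨hac, hint⟩]
    have hint_eq : ∫ t, llr (κ x) η t ∂(κ x)
        = (∫ t, llr (κ x) ν t ∂(κ x)) + ∫ t, G t ∂(κ x) := by
      rw [integral_congr_ae h_decomp, integral_add hint hG_int_κ]
    have hnn : 0 ≤ ∫ t, llr (κ x) η t ∂(κ x) := gibbs_nonneg (κ x) η hκη hllr_int_κ
    have hsum : (∫ t, G t ∂(κ x)) + M = ∫ t, (G t + M) ∂(κ x) := by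
      rw [integral_add hG_int_κ (integrable_const M), integral_const, probReal_univ]
      simp
    calc klDiv (κ x) η + ENNReal.ofReal M
        = ENNReal.ofReal ((∫ t, llr (κ x) η t ∂(κ x)) + M) := by
          rw [hL, ENNReal.ofReal_add hnn hM0]
      _ = ENNReal.ofReal ((∫ t, llr (κ x) ν t ∂(κ x)) + ((∫ t, G t ∂(κ x)) + M)) := by
          rw [hint_eq]; ring_nf
      _ ≤ ENNReal.ofReal (∫ t, llr (κ x) ν t ∂(κ x))
            + ENNReal.ofReal ((∫ t, G t ∂(κ x)) + M) := ENNReal.ofReal_add_le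
      _ ≤ klDiv (κ x) ν + Bp x := by
          rw [hR, hsum, ofReal_integral_eq_lintegral_ofReal hGM_int_κ hGM_nn_κ]
  -- assemble
  have key : ∫⁻ x, klDiv (κ x) η ∂μ' ≤ ∫⁻ x, klDiv (κ x) ν ∂μ' := by
    have h1 : (∫⁻ x, klDiv (κ x) η ∂μ') + ENNReal.ofReal M
        ≤ (∫⁻ x, klDiv (κ x) ν ∂μ') + ENNReal.ofReal M := by
      calc (∫⁻ x, klDiv (κ x) η ∂μ') + ENNReal.ofReal M
          = ∫⁻ x, (klDiv (κ x) η + ENNReal.ofReal M) ∂μ' := by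
            rw [lintegral_add_right _ measurable_const, lintegral_const, measure_univ, mul_one]
        _ ≤ ∫⁻ x, (klDiv (κ x) ν + Bp x) ∂μ' := lintegral_mono_ae h_ptwise
        _ = (∫⁻ x, klDiv (κ x) ν ∂μ') + ∫⁻ x, Bp x ∂μ' := lintegral_add_right _ hBp_meas
        _ ≤ (∫⁻ x, klDiv (κ x) ν ∂μ') + ENNReal.ofReal M := by
            refine add_le_add_right ?_ _
            have hsum_int : Integrable (fun t => G t + M) η :=
              hG_int_η.add (integrable_const M)
            rw [hBp_lint, ← ofReal_integral_eq_lintegral_ofReal hsum_int hGM_nonneg_η]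
            refine ENNReal.ofReal_le_ofReal ?_
            rw [integral_add hG_int_η (integrable_const M), integral_const, probReal_univ]
            simp only [smul_eq_mul, ENNReal.toReal_one, one_mul]
            linarith
    exact (ENNReal.add_le_add_iff_right ENNReal.ofReal_ne_top).mp h1
  calc ENNReal.ofReal c * ∫⁻ x, klDiv (κ x) η ∂μ'
      ≤ ENNReal.ofReal c * ∫⁻ x, klDiv (κ x) ν ∂μ' := mul_le_mul_right key _
    _ = ∫⁻ x, klDiv (κ x) ν ∂(ENNReal.ofReal c • μ') := by rw [lintegral_smul_measure, smul_eq_mul]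
    _ ≤ ∫⁻ x, klDiv (κ x) ν ∂μ := lintegral_mono' hμle le_rfl
end
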